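/- Let G be a finite group, F a field whose characteristic does not divide |G|, and let I be the two-sided ideal of the group algebra F[G] generated by the norm elements N_H = Σ_{h∈H} h for all nontrivial subgroups H of G. Then G admits a free linear representation over F if and only if I is a proper ideal of F[G]. -/

import Mathlib

universe u

open scoped Classical in
theorem stmt_2 {G : Type u} [Group G] [Fintype G] {F : Type u} [Field F]
    (hchar : ¬ (ringChar F ∣ Fintype.card G))
    (I : TwoSidedIdeal (MonoidAlgebra F G))
    (hI : I = TwoSidedIdeal.span
      {x : MonoidAlgebra F G | ∃ H : Subgroup G, H ≠ ⊥ ∧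
        x = ∑ h : H, MonoidAlgebra.single (h : G) (1 : F)}) :
    (∃ (V : Type u) (_ : AddCommGroup V) (_ : Module F V)
        (ρ : Representation F G V),
        (∃ v : V, v ≠ 0) ∧ ∀ g : G, g ≠ 1 → ∀ v : V, v ≠ 0 → ρ g v ≠ v) ↔
      I ≠ ⊤ := by
  constructor
  · rintro ⟨V, _, _, ρ, ⟨v₀, hv₀⟩, hfree⟩ htop
    -- the lifted algebra map
    set φ : MonoidAlgebra F G →ₐ[F] Module.End F V := MonoidAlgebra.lift F (Module.End F V) G ρ
      with hφ
    have hφs : ∀ g : G, φ (MonoidAlgebra.single g 1) = ρ g := by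
      intro g
      simp [hφ, MonoidAlgebra.lift_single]
    -- every generator is in the kernel of φ
    have hsub : {x : MonoidAlgebra F G | ∃ H : Subgroup G, H ≠ ⊥ ∧
        x = ∑ h : H, MonoidAlgebra.single (h : G) (1 : F)} ⊆
        (TwoSidedIdeal.ker φ : Set (MonoidAlgebra F G)) := by
      rintro x ⟨H, hH, rfl⟩
      rw [SetLike.mem_coe, TwoSidedIdeal.mem_ker, map_sum]
      ext v
      simp only [LinearMap.coe_sum, Finset.sum_apply, LinearMap.zero_apply, hφs]
      obtain ⟨h₀, hh₀⟩ := Subgroup.ne_bot_iff_exists_ne_one.mp hH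
      set w : V := ∑ h : H, ρ (h : G) v with hw
      have hfix : ρ (h₀ : G) w = w := by
        rw [hw, map_sum]
        refine Fintype.sum_equiv (Equiv.mulLeft h₀) _ _ fun h => ?_
        have : ρ (h₀ : G) (ρ (h : G) v) = ρ ((h₀ * h : H) : G) v := by
          simp [map_mul]
        rw [this]
        rfl
      by_contra hw0
      exact hfree (h₀ : G) (fun e => hh₀ (by ext; simpa using e)) w hw0 hfix
    have h1 : (1 : MonoidAlgebra F G) ∈ I := htop ▸ trivial
    rw [hI, TwoSidedIdeal.mem_span_iff] at h1
    have := (TwoSidedIdeal.mem_ker φ).mp (h1 (TwoSidedIdeal.ker φ) hsub)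
    rw [map_one] at this
    have : (1 : Module.End F V) v₀ = (0 : Module.End F V) v₀ := by rw [this]
    simp at this
    exact hv₀ this
  · intro hne
    -- the quotient ring as a representation
    set Q := I.ringCon.Quotient with hQ
    set π : MonoidAlgebra F G →+* Q := I.ringCon.mk' with hπ
    have hmem : ∀ x : MonoidAlgebra F G, x ∈ I ↔ π x = 0 := by
      intro x
      rw [TwoSidedIdeal.mem_iff]
      constructor
      · intro h
        have : π x = π 0 := (RingCon.eq I.ringCon).mpr h
        simpa using this
      · intro h
        have : π x = π 0 := by simpa using h
        exact (RingCon.eq I.ringCon).mp this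
    refine ⟨Q, inferInstance, inferInstance,
      ⟨⟨fun g => LinearMap.mulLeft F (π (MonoidAlgebra.single g 1)), ?_⟩, ?_⟩, ⟨1, ?_⟩, ?_⟩
    · show LinearMap.mulLeft F (π (MonoidAlgebra.single (1 : G) 1)) = 1
      have : (MonoidAlgebra.single (1 : G) (1 : F)) = 1 := rfl
      rw [this, map_one, LinearMap.mulLeft_one]
      rfl
    · intro a b
      show LinearMap.mulLeft F (π (MonoidAlgebra.single (a * b) 1)) = _
      have : (MonoidAlgebra.single (a * b) (1 : F)) =
          MonoidAlgebra.single a 1 * MonoidAlgebra.single b 1 := by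
        rw [MonoidAlgebra.single_mul_single, one_mul]
      rw [this, map_mul, LinearMap.mulLeft_mul]
      rfl
    · -- 1 ≠ 0 in the quotient
      intro h10
      apply hne
      apply TwoSidedIdeal.eq_top
      rw [hmem, map_one]
      exact h10
    · -- freeness
      intro g hg v hv hfix
      apply hv
      have hfix' : π (MonoidAlgebra.single g 1) * v = v := hfix
      -- the stabilizer subgroup of v
      set St : Subgroup G :=
        { carrier := {x : G | π (MonoidAlgebra.single x 1) * v = v}
          one_mem' := by
            have : (MonoidAlgebra.single (1 : G) (1 : F)) = 1 := rfl
            simp [this]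
          mul_mem' := by
            intro a b ha hb
            simp only [Set.mem_setOf_eq] at ha hb ⊢
            have : (MonoidAlgebra.single (a * b) (1 : F)) =
                MonoidAlgebra.single a 1 * MonoidAlgebra.single b 1 := by
              rw [MonoidAlgebra.single_mul_single, one_mul]
            rw [this, map_mul, mul_assoc, hb, ha]
          inv_mem' := by
            intro a ha
            simp only [Set.mem_setOf_eq] at ha ⊢
            have key : π (MonoidAlgebra.single a⁻¹ 1) * (π (MonoidAlgebra.single a 1) * v)
                = π (MonoidAlgebra.single a⁻¹ 1) * v := by rw [ha]
            rw [← mul_assoc, ← map_mul, MonoidAlgebra.single_mul_single, one_mul,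
              inv_mul_cancel] at key
            have : (MonoidAlgebra.single (1 : G) (1 : F)) = 1 := rfl
            rw [this, map_one, one_mul] at key
            exact key.symm } with hSt
      have hgSt : g ∈ St := hfix'
      have hzle : Subgroup.zpowers g ≤ St := Subgroup.zpowers_le.mpr hgSt
      have hbot : Subgroup.zpowers g ≠ ⊥ := fun h => hg (Subgroup.zpowers_eq_bot.mp h)
      have hNmem : (∑ h : Subgroup.zpowers g, MonoidAlgebra.single (h : G) (1 : F)) ∈ I := by
        rw [hI]
        exact TwoSidedIdeal.subset_span ⟨Subgroup.zpowers g, hbot, rfl⟩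
      have hN0 : π (∑ h : Subgroup.zpowers g, MonoidAlgebra.single (h : G) (1 : F)) = 0 :=
        (hmem _).mp hNmem
      have hsum : π (∑ h : Subgroup.zpowers g, MonoidAlgebra.single (h : G) (1 : F)) * v
          = algebraMap F Q (Fintype.card (Subgroup.zpowers g) : F) * v := by
        rw [map_sum, Finset.sum_mul]
        have : ∀ h : Subgroup.zpowers g, π (MonoidAlgebra.single (h : G) 1) * v = v := by
          intro h
          exact hzle h.2
        rw [Finset.sum_congr rfl (fun h _ => this h), Finset.sum_const, Finset.card_univ,
          nsmul_eq_mul, map_natCast]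
      rw [hN0, zero_mul] at hsum
      have hcard : ((Fintype.card (Subgroup.zpowers g) : F)) ≠ 0 := by
        intro h0
        have hdvd : ringChar F ∣ Fintype.card (Subgroup.zpowers g) :=
          (CharP.cast_eq_zero_iff F (ringChar F) _).mp h0
        have hdvd2 : Fintype.card (Subgroup.zpowers g) ∣ Fintype.card G := by
          have := Subgroup.card_subgroup_dvd_card (Subgroup.zpowers g)
          simpa [Nat.card_eq_fintype_card] using this
        exact hchar (hdvd.trans hdvd2)
      calc v = algebraMap F Q ((Fintype.card (Subgroup.zpowers g) : F))⁻¹ *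
              (algebraMap F Q (Fintype.card (Subgroup.zpowers g) : F) * v) := by
                rw [← mul_assoc, ← map_mul, inv_mul_cancel₀ hcard, map_one, one_mul]
        _ = 0 := by rw [← hsum, mul_zero]
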